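/- (Matsumoto's hyperdeterminantal Binet–Cauchy formula, integral form.) Let (M,μ) be a sigma-finite measure space, let m, n be positive integers, and let φ_{k,r} : M → ℂ, for 1 ≤ k ≤ 2m and 1 ≤ r ≤ n, be measurable functions such that for every tuple (r_1,…,r_{2m}) ∈ {1,…,n}^{2m} the function x ↦ ∏_{k=1}^{2m} φ_{k,r_k}(x) is integrable with respect to μ. Define A(r_1,…,r_{2m}) = ∫_M ∏_{k=1}^{2m} φ_{k,r_k}(x) dμ(x). Then Det(A) = (1/n!) ∫_{M^n} ∏_{k=1}^{2m} det( φ_{k,r}(x_s) )_{1≤r,s≤n} dμ(x_1)⋯dμ(x_n). -/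

import Mathlib

open scoped BigOperators
open MeasureTheory

/-- Cayley's first hyperdeterminant of a `2m`-dimensional array of size `n` in each direction. -/
noncomputable def hyperDet (m n : ℕ) (A : (Fin (2 * m) → Fin n) → ℂ) : ℂ :=
  ((n.factorial : ℕ) : ℂ)⁻¹ *
    ∑ σ : Fin (2 * m) → Equiv.Perm (Fin n),
      (∏ k : Fin (2 * m), ((Equiv.Perm.sign (σ k) : ℤ) : ℂ)) *
        ∏ j : Fin n, A (fun k => σ k j)

set_option maxHeartbeats 1000000 in
/-- Matsumoto's hyperdeterminantal Binet–Cauchy formula, integral form. -/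
theorem hyperDet_binet_cauchy (m n : ℕ) (hm : 0 < m) (hn : 0 < n)
    {M : Type*} [MeasurableSpace M] (μ : Measure M) [SigmaFinite μ]
    (φ : Fin (2 * m) → Fin n → M → ℂ)
    (hmeas : ∀ k r, Measurable (φ k r))
    (hint : ∀ r : Fin (2 * m) → Fin n, Integrable (fun x => ∏ k : Fin (2 * m), φ k (r k) x) μ) :
    hyperDet m n (fun r => ∫ x, ∏ k : Fin (2 * m), φ k (r k) x ∂μ) =
      ((n.factorial : ℕ) : ℂ)⁻¹ *
        ∫ x : Fin n → M,
          ∏ k : Fin (2 * m), Matrix.det (Matrix.of fun r s : Fin n => φ k r (x s))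
          ∂(Measure.pi fun _ => μ) := by
  rw [hyperDet]
  congr 1
  letI : MeasureSpace M := ⟨μ⟩
  have hdet : ∀ (x : Fin n → M),
      (∏ k : Fin (2 * m), Matrix.det (Matrix.of fun r s : Fin n => φ k r (x s)))
      = ∑ σ : Fin (2 * m) → Equiv.Perm (Fin n),
          (∏ k, ((Equiv.Perm.sign (σ k) : ℤ) : ℂ)) * ∏ s : Fin n, ∏ k, φ k (σ k s) (x s) := by
    intro x
    simp_rw [Matrix.det_apply, Matrix.of_apply, Units.smul_def, zsmul_eq_mul]
    rw [Finset.prod_univ_sum]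
    rw [Fintype.piFinset_univ]
    refine Finset.sum_congr rfl fun σ _ => ?_
    rw [Finset.prod_mul_distrib]
    congr 1
    exact Finset.prod_comm
  simp_rw [hdet]
  rw [integral_finset_sum]
  · refine (Finset.sum_congr rfl fun σ _ => ?_).symm
    rw [integral_const_mul]
    congr 1
    have := MeasureTheory.integral_fintype_prod_eq_prod (𝕜 := ℂ) (ι := Fin n) (μ := fun _ => volume)
      (fun s x => ∏ k, φ k (σ k s) x)
    rw [show (Measure.pi fun _ : Fin n => μ) = volume from rfl]
    erw [this]
    rfl
  · intro σ _
    refine Integrable.const_mul ?_ _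
    exact MeasureTheory.Integrable.fintype_prod (fun s => hint (fun k => σ k s))
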